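/- Let (X_n)_{n∈ℕ} be a sequence of real Banach spaces and let X = ∏_{n∈ℕ} X_n carry the product topology. Let (T_t)_{t≥0} be a uniformly continuous semigroup of continuous linear operators on X, i.e., a strongly continuous semigroup such that T_h → id uniformly on every (von Neumann) bounded subset of X as h → 0⁺. Then its generator A is everywhere defined and continuous linear (A x = lim_{h→0⁺} h⁻¹ • (T_h x − x) exists for every x ∈ X and A ∈ L(X)), and for every x ∈ X and t ≥ 0 one has T_t x = ∑_{k=0}^∞ (t^k / k!) • A^k x, the series converging in the product topology. -/

import Mathlib

set_option linter.unusedSectionVars false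
set_option linter.unusedVariables false
set_option maxHeartbeats 1000000

open Filter Topology Set Uniformity

namespace Stmt15

variable {X : ℕ → Type*} [∀ n, NormedAddCommGroup (X n)]
    [∀ n, NormedSpace ℝ (X n)] [∀ n, CompleteSpace (X n)]

/-- restriction to finitely many coordinates -/
noncomputable def restr (G : Finset ℕ) : (∀ n, X n) →L[ℝ] (∀ i : G, X i) :=
  ContinuousLinearMap.pi fun i : G => ContinuousLinearMap.proj (i : ℕ)

@[simp] lemma restr_apply (G : Finset ℕ) (x : ∀ n, X n) (i : G) :
    restr G x i = x i := rfl

/-- the seminorm given by finitely many coordinates -/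
noncomputable def pnorm (G : Finset ℕ) (x : ∀ n, X n) : ℝ := ‖restr G x‖

lemma pnorm_nonneg (G : Finset ℕ) (x : ∀ n, X n) : 0 ≤ pnorm G x := norm_nonneg _

lemma norm_coord_le {G : Finset ℕ} {n : ℕ} (hn : n ∈ G) (x : ∀ n, X n) :
    ‖x n‖ ≤ pnorm G x := by
  simpa [pnorm] using norm_le_pi_norm (restr G x) ⟨n, hn⟩

lemma pnorm_le {G : Finset ℕ} {x : ∀ n, X n} {c : ℝ} (hc : 0 ≤ c)
    (h : ∀ n ∈ G, ‖x n‖ ≤ c) : pnorm G x ≤ c :=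
  (pi_norm_le_iff_of_nonneg hc).2 fun i => h i i.2

lemma pnorm_mono {G G' : Finset ℕ} (hG : G ⊆ G') (x : ∀ n, X n) :
    pnorm G x ≤ pnorm G' x :=
  pnorm_le (pnorm_nonneg _ _) fun n hn => norm_coord_le (hG hn) x

lemma pnorm_smul (G : Finset ℕ) (c : ℝ) (x : ∀ n, X n) :
    pnorm G (c • x) = |c| * pnorm G x := by
  unfold pnorm
  rw [map_smul, norm_smul, Real.norm_eq_abs]

lemma pnorm_add_le (G : Finset ℕ) (x y : ∀ n, X n) :
    pnorm G (x + y) ≤ pnorm G x + pnorm G y := by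
  unfold pnorm; rw [map_add]; exact norm_add_le _ _

lemma pnorm_sub_le (G : Finset ℕ) (x y : ∀ n, X n) :
    pnorm G (x - y) ≤ pnorm G x + pnorm G y := by
  unfold pnorm; rw [map_sub]; exact norm_sub_le _ _

lemma coord_eq_zero_of_pnorm {G : Finset ℕ} {x : ∀ n, X n} (h : pnorm G x = 0)
    {n : ℕ} (hn : n ∈ G) : x n = 0 := by
  have := norm_coord_le hn x
  rw [h] at this
  exact norm_le_zero_iff.1 this

/-- extension by zero -/
noncomputable def extL (G : Finset ℕ) : (∀ i : G, X i) →L[ℝ] (∀ n, X n) where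
  toFun := fun u n => if h : n ∈ G then u ⟨n, h⟩ else 0
  map_add' := by
    intro u v; funext n; by_cases h : n ∈ G <;> simp [h]
  map_smul' := by
    intro c u; funext n; by_cases h : n ∈ G <;> simp [h]
  cont := by
    apply continuous_pi
    intro n
    by_cases h : n ∈ G
    · simpa [h] using (continuous_apply (⟨n, h⟩ : G))
    · simpa [h] using (continuous_const :
        Continuous fun _ : ∀ i : G, X i => (0 : X n))

lemma extL_apply_mem (G : Finset ℕ) (u : ∀ i : G, X i) {n : ℕ} (hn : n ∈ G) :
    extL G u n = u ⟨n, hn⟩ := by simp [extL, hn]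

lemma extL_apply_not_mem (G : Finset ℕ) (u : ∀ i : G, X i) {n : ℕ} (hn : n ∉ G) :
    extL G u n = 0 := by simp [extL, hn]

@[simp] lemma restr_extL (G : Finset ℕ) (u : ∀ i : G, X i) :
    restr G (extL G u) = u := by
  funext i
  simp [extL, i.2]

lemma norm_extL_coord_le (G : Finset ℕ) (u : ∀ i : G, X i) (n : ℕ) :
    ‖extL G u n‖ ≤ ‖u‖ := by
  by_cases h : n ∈ G
  · rw [extL_apply_mem G u h]; exact norm_le_pi_norm u ⟨n, h⟩
  · rw [extL_apply_not_mem G u h]; simp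

lemma pnorm_extL_le (G G' : Finset ℕ) (u : ∀ i : G, X i) :
    pnorm G' (extL G u) ≤ ‖u‖ :=
  pnorm_le (norm_nonneg u) fun n _ => norm_extL_coord_le G u n

lemma norm_restr (G : Finset ℕ) (x : ∀ n, X n) : ‖restr G x‖ = pnorm G x := rfl

/-- masking: keep coordinates in `G`, zero elsewhere -/
noncomputable def mask (G : Finset ℕ) (x : ∀ n, X n) : ∀ n, X n := extL G (restr G x)

lemma mask_apply_mem {G : Finset ℕ} {n : ℕ} (hn : n ∈ G) (x : ∀ n, X n) :
    mask G x n = x n := by simp [mask, extL_apply_mem G _ hn]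

lemma mask_apply_not_mem {G : Finset ℕ} {n : ℕ} (hn : n ∉ G) (x : ∀ n, X n) :
    mask G x n = 0 := extL_apply_not_mem _ _ hn

lemma pnorm_sub_mask (G : Finset ℕ) (x : ∀ n, X n) : pnorm G (x - mask G x) = 0 := by
  have : ∀ n ∈ G, ‖(x - mask G x) n‖ ≤ 0 := by
    intro n hn
    simp [mask_apply_mem hn]
  exact le_antisymm (pnorm_le le_rfl this) (pnorm_nonneg _ _)

lemma pnorm_mask_le (G G' : Finset ℕ) (x : ∀ n, X n) :
    pnorm G' (mask G x) ≤ pnorm G x :=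
  pnorm_extL_le G G' (restr G x)

/-- homogeneity + bound on a `pnorm`-ball gives a seminorm bound -/
lemma scale_bound {E : Type*} [SeminormedAddCommGroup E] [NormedSpace ℝ E]
    (L : (∀ n, X n) →L[ℝ] E) (G : Finset ℕ) {r M : ℝ} (hr : 0 < r) (hM : 0 ≤ M)
    (h : ∀ x, pnorm G x < r → ‖L x‖ ≤ M) :
    ∀ x, ‖L x‖ ≤ 2 * M / r * pnorm G x := by
  intro x
  have key : ∀ c : ℝ, pnorm G x < c → ‖L x‖ ≤ 2 * M / r * c := by
    intro c hc
    have hc0 : 0 < c := lt_of_le_of_lt (pnorm_nonneg _ _) hc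
    have hpos : (0:ℝ) < r / (2 * c) := by positivity
    have h1 : pnorm G ((r / (2 * c)) • x) < r := by
      rw [pnorm_smul, abs_of_pos hpos]
      calc r / (2 * c) * pnorm G x ≤ r / (2 * c) * c := by
            apply mul_le_mul_of_nonneg_left hc.le hpos.le
        _ = r / 2 := by field_simp
        _ < r := by linarith
    have h2 := h _ h1
    rw [map_smul, norm_smul, Real.norm_eq_abs, abs_of_pos hpos] at h2
    have h3 : ‖L x‖ ≤ M * (2 * c) / r := by
      rw [le_div_iff₀ hr]
      have h4 : (r / (2*c)) * ‖L x‖ * (2*c) ≤ M * (2*c) :=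
        mul_le_mul_of_nonneg_right h2 (by positivity)
      calc ‖L x‖ * r = r/(2*c) * ‖L x‖ * (2*c) := by field_simp
        _ ≤ M * (2*c) := h4
    calc ‖L x‖ ≤ M * (2 * c) / r := h3
      _ = 2 * M / r * c := by ring
  rcases eq_or_lt_of_le hM with hM0 | hMpos
  · have := key (pnorm G x + 1) (by linarith)
    simpa [← hM0] using this
  · have h2Mr : 0 < 2 * M / r := by positivity
    apply le_of_forall_pos_le_add
    intro ε hε
    have hq : 0 < ε / (2 * M / r) := by positivity
    have := key (pnorm G x + ε / (2 * M / r)) (by linarith)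
    calc ‖L x‖ ≤ 2*M/r * (pnorm G x + ε / (2*M/r)) := this
      _ = 2*M/r * pnorm G x + ε := by field_simp

/-- uniform boundedness principle on the countable product -/
theorem ubp {E : Type*} [NormedAddCommGroup E] [NormedSpace ℝ E] {ι : Type*}
    (f : ι → ((∀ n, X n) →L[ℝ] E)) (hpt : ∀ x : ∀ n, X n, ∃ C, ∀ i, ‖f i x‖ ≤ C) :
    ∃ (G : Finset ℕ) (C : ℝ), 0 ≤ C ∧ ∀ i, ∀ x : ∀ n, X n, ‖f i x‖ ≤ C * pnorm G x := by
  classical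
  set S : ℕ → Set (∀ n, X n) := fun N => ⋂ i, {x | ‖f i x‖ ≤ N} with hS
  have hSc : ∀ N, IsClosed (S N) := fun N => isClosed_iInter fun i =>
    isClosed_le ((f i).continuous.norm) continuous_const
  have hScov : ⋃ N, S N = univ := by
    ext x
    simp only [mem_iUnion, mem_iInter, mem_setOf_eq, mem_univ, iff_true, hS]
    obtain ⟨C, hC⟩ := hpt x
    obtain ⟨N, hN⟩ := exists_nat_ge C
    exact ⟨N, fun i => (hC i).trans hN⟩
  haveI : BaireSpace (∀ n, X n) := by
    letI : MetricSpace (∀ n, X n) := PiCountable.metricSpace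
    exact BaireSpace.of_completelyPseudoMetrizable
  obtain ⟨N, hN⟩ := nonempty_interior_of_iUnion_of_closed hSc hScov
  obtain ⟨x₀, hx₀⟩ := hN
  have hopen := isOpen_interior (s := S N)
  rw [isOpen_pi_iff] at hopen
  obtain ⟨I, u, hu, hsub⟩ := hopen x₀ hx₀
  set I' : Finset ℕ := insert 0 I with hI'
  set u' : ∀ n, Set (X n) := fun n => if n ∈ I then u n else univ with hu'def
  have hu' : ∀ n, IsOpen (u' n) ∧ x₀ n ∈ u' n := by
    intro n
    by_cases h : n ∈ I
    · simpa [hu'def, h] using hu n h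
    · simp [hu'def, h]
  have hsub' : ∀ y : ∀ n, X n, (∀ n ∈ I', y n ∈ u' n) → y ∈ S N := by
    intro y hy
    apply interior_subset
    apply hsub
    rw [Set.mem_pi]
    intro n hn
    have hnI : n ∈ I := hn
    have := hy n (by simp [hI', hnI])
    simpa [hu'def, hnI] using this
  -- radii
  have hrad : ∀ n, ∃ ρ > 0, Metric.ball (x₀ n) ρ ⊆ u' n := by
    intro n
    obtain ⟨ho, hm⟩ := hu' n
    obtain ⟨ρ, hρ, hball⟩ := Metric.isOpen_iff.1 ho _ hm
    exact ⟨ρ, hρ, hball⟩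
  choose ρ hρpos hρball using hrad
  have hI'ne : I'.Nonempty := ⟨0, by simp [hI']⟩
  set r : ℝ := I'.inf' hI'ne ρ with hrdef
  have hrpos : 0 < r := by
    rw [hrdef, Finset.lt_inf'_iff]
    exact fun n _ => hρpos n
  obtain ⟨C₀', hC₀'⟩ := hpt x₀
  set C₀ : ℝ := max C₀' 0 with hC₀def
  have hC₀ : ∀ i, ‖f i x₀‖ ≤ C₀ := fun i => (hC₀' i).trans (le_max_left _ _)
  have hC₀0 : (0:ℝ) ≤ C₀ := le_max_right _ _
  have key : ∀ x : ∀ n, X n, pnorm I' x < r → ∀ i, ‖f i x‖ ≤ N + C₀ := by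
    intro x hx i
    have hmem : x₀ + x ∈ S N := by
      apply hsub'
      intro n hn
      apply hρball n
      have h1 : ‖x n‖ ≤ pnorm I' x := norm_coord_le hn x
      have : dist ((x₀ + x) n) (x₀ n) < ρ n := by
        have h2 : r ≤ ρ n := Finset.inf'_le _ hn
        simp only [Pi.add_apply, dist_eq_norm, add_sub_cancel_left]
        linarith
      exact this
    have hmem' : ‖f i (x₀ + x)‖ ≤ N := by
      have := mem_iInter.1 hmem i
      exact this
    have : f i x = f i (x₀ + x) - f i x₀ := by
      rw [map_add]; abel
    rw [this]
    calc ‖f i (x₀ + x) - f i x₀‖ ≤ ‖f i (x₀ + x)‖ + ‖f i x₀‖ := norm_sub_le _ _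
      _ ≤ N + C₀ := add_le_add hmem' (hC₀ i)
  have hNC₀ : (0:ℝ) ≤ N + C₀ := by positivity
  refine ⟨I', 2 * (N + C₀) / r, by positivity, fun i x => ?_⟩
  exact scale_bound (f i) I' hrpos hNC₀ (fun y hy => key y hy i) x


section Semigroup

variable (T : ℝ → (∀ n, X n) →L[ℝ] (∀ n, X n))

/-- finitely many coordinates control each coordinate of the orbit, uniformly on compact
time intervals (uniform boundedness). -/
lemma row_bound (horbit : ∀ x : ∀ n, X n, ContinuousOn (fun t : ℝ => T t x) (Set.Ici 0))
    (m : ℕ) (τ : ℝ) (hτ : 0 ≤ τ) :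
    ∃ (G : Finset ℕ) (C : ℝ), m ∈ G ∧ 0 ≤ C ∧
      ∀ t ∈ Icc (0:ℝ) τ, ∀ x : ∀ n, X n, ‖T t x m‖ ≤ C * pnorm G x := by
  have hpt : ∀ x : ∀ n, X n, ∃ C, ∀ i : Icc (0:ℝ) τ,
      ‖((ContinuousLinearMap.proj m : (∀ n, X n) →L[ℝ] X m).comp (T i)) x‖ ≤ C := by
    intro x
    have hcont : ContinuousOn (fun t : ℝ => T t x m) (Icc (0:ℝ) τ) :=
      ((continuous_apply m).comp_continuousOn (horbit x)).mono Icc_subset_Ici_self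
    obtain ⟨C, hC⟩ := isCompact_Icc.exists_bound_of_continuousOn hcont
    exact ⟨C, fun i => hC i i.2⟩
  obtain ⟨G, C, hC0, hbound⟩ := ubp _ hpt
  refine ⟨insert m G, C, Finset.mem_insert_self _ _, hC0, fun t ht x => ?_⟩
  calc ‖T t x m‖ = ‖((ContinuousLinearMap.proj m : (∀ n, X n) →L[ℝ] X m).comp
        (T (⟨t, ht⟩ : Icc (0:ℝ) τ))) x‖ := rfl
    _ ≤ C * pnorm G x := hbound _ x
    _ ≤ C * pnorm (insert m G) x :=
        mul_le_mul_of_nonneg_left (pnorm_mono (Finset.subset_insert _ _) x) hC0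

/-- rows of `T h - 1` are uniformly supported on finitely many coordinates and small for
small `h > 0`. -/
lemma row_small
    (horbit : ∀ x : ∀ n, X n, ContinuousOn (fun t : ℝ => T t x) (Set.Ici 0))
    (hunif : ∀ B : Set (∀ n, X n), Bornology.IsVonNBounded ℝ B →
      TendstoUniformlyOn (fun (h : ℝ) (x : ∀ n, X n) => T h x)
        (fun x => x) (𝓝[>] 0) B) (m : ℕ) :
    ∃ (G : Finset ℕ) (C : ℝ), m ∈ G ∧ 0 ≤ C ∧
      (∀ t ∈ Icc (0:ℝ) 1, ∀ x : ∀ n, X n, ‖T t x m‖ ≤ C * pnorm G x) ∧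
      (∀ ε > 0, ∃ δ > 0, δ ≤ 1 ∧ ∀ h : ℝ, 0 < h → h < δ → ∀ x : ∀ n, X n,
        ‖T h x m - x m‖ ≤ ε * pnorm G x) := by
  obtain ⟨G, C, hmG, hC0, hbound⟩ := row_bound T horbit m 1 zero_le_one
  have hsupp : ∀ t ∈ Icc (0:ℝ) 1, ∀ x : ∀ n, X n, pnorm G x = 0 → T t x m = 0 := by
    intro t ht x hx
    have := hbound t ht x
    rw [hx, mul_zero] at this
    exact norm_le_zero_iff.1 this
  -- the bounded set of `G`-supported unit vectors
  set B : Set (∀ n, X n) := extL G '' Metric.closedBall 0 1 with hBdef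
  have hB : Bornology.IsVonNBounded ℝ B :=
    (NormedSpace.isVonNBounded_closedBall ℝ (∀ i : G, X i) 1).image (σ := RingHom.id ℝ) (extL G)
  have hu := hunif B hB
  have hev : ∀ ε > 0, ∀ᶠ h in 𝓝[>] (0:ℝ), ∀ y ∈ B, ‖T h y m - y m‖ < ε := by
    intro ε hε
    have hmem : {p : (∀ n, X n) × (∀ n, X n) | dist (p.1 m) (p.2 m) < ε}
        ∈ 𝓤 (∀ n, X n) := by
      rw [Pi.uniformity]
      exact mem_iInf_of_mem m (preimage_mem_comap (Metric.dist_mem_uniformity hε))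
    filter_upwards [hu _ hmem] with h hh y hy
    have := hh y hy
    simp only [mem_setOf_eq, dist_eq_norm] at this
    rw [norm_sub_rev] at this
    exact this
  refine ⟨G, C, hmG, hC0, hbound, fun ε hε => ?_⟩
  obtain ⟨δ₀, hδ₀, hδsub⟩ := Metric.mem_nhdsWithin_iff.1 (hev ε hε)
  refine ⟨min δ₀ 1, lt_min hδ₀ zero_lt_one, min_le_right _ _, fun h h0 hδ x => ?_⟩
  have hh1 : h ≤ 1 := le_of_lt (lt_of_lt_of_le hδ (min_le_right _ _))
  have hhδ₀ : h < δ₀ := lt_of_lt_of_le hδ (min_le_left _ _)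
  have hIcc : h ∈ Icc (0:ℝ) 1 := ⟨h0.le, hh1⟩
  -- reduce to the masked vector
  have hmaskeq : T h x m - x m = T h (mask G x) m - mask G x m := by
    have hd : pnorm G (x - mask G x) = 0 := pnorm_sub_mask G x
    have h1 : T h (x - mask G x) m = 0 := hsupp h hIcc _ hd
    have h2 : (x - mask G x) m = 0 := coord_eq_zero_of_pnorm hd hmG
    have h3 : T h x m - T h (mask G x) m = 0 := by
      have e : T h (x - mask G x) = T h x - T h (mask G x) := map_sub _ _ _
      have e2 : (T h x - T h (mask G x)) m = 0 := by rw [← e]; exact h1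
      simpa using e2
    have h4 : x m - mask G x m = 0 := by simpa using h2
    rw [sub_eq_zero.1 h3, sub_eq_zero.1 h4]
  rcases eq_or_lt_of_le (pnorm_nonneg G x) with hzero | hpos
  · -- pnorm = 0 : everything vanishes
    have h1 : T h x m = 0 := hsupp h hIcc x hzero.symm
    have h2 : x m = 0 := coord_eq_zero_of_pnorm hzero.symm hmG
    rw [h1, h2, sub_zero, norm_zero, ← hzero, mul_zero]
  · set c : ℝ := pnorm G x with hcdef
    set y : ∀ n, X n := extL G (c⁻¹ • restr G x) with hydef
    have hyB : y ∈ B := by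
      refine ⟨c⁻¹ • restr G x, ?_, rfl⟩
      rw [Metric.mem_closedBall, dist_zero_right, norm_smul, norm_inv,
        Real.norm_eq_abs, abs_of_pos hpos, norm_restr]
      rw [← hcdef, inv_mul_cancel₀ (ne_of_gt hpos)]
    have hvy : mask G x = c • y := by
      rw [hydef, mask, ← map_smul, smul_smul, mul_inv_cancel₀ (ne_of_gt hpos), one_smul]
    have hsmall := hδsub ⟨by simpa [abs_of_pos h0] using hhδ₀, h0⟩ y hyB
    have : ‖T h x m - x m‖ = c * ‖T h y m - y m‖ := by
      rw [hmaskeq, hvy]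
      have e1 : T h (c • y) m = c • T h y m := by rw [map_smul]; rfl
      have e2 : (c • y) m = c • y m := rfl
      rw [e1, e2, ← smul_sub, norm_smul, Real.norm_eq_abs, abs_of_pos hpos]
    rw [this]
    calc c * ‖T h y m - y m‖ ≤ c * ε := mul_le_mul_of_nonneg_left hsmall.le hpos.le
      _ = ε * pnorm G x := by rw [mul_comm]

end Semigroup

/-- factorization of a continuous linear map through finitely many coordinates -/
lemma clm_factor {E : Type*} [NormedAddCommGroup E] [NormedSpace ℝ E]
    (L : (∀ n, X n) →L[ℝ] E) :
    ∃ (G : Finset ℕ) (C : ℝ), 0 ≤ C ∧ ∀ x : ∀ n, X n, ‖L x‖ ≤ C * pnorm G x := by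
  obtain ⟨G, C, hC, h⟩ := ubp (fun _ : Unit => L) (fun x => ⟨‖L x‖, fun _ => le_rfl⟩)
  exact ⟨G, C, hC, h ()⟩

lemma clm_ker_of_pnorm {E : Type*} [NormedAddCommGroup E] [NormedSpace ℝ E]
    {L : (∀ n, X n) →L[ℝ] E} {G : Finset ℕ} {C : ℝ}
    (hL : ∀ x : ∀ n, X n, ‖L x‖ ≤ C * pnorm G x) {x : ∀ n, X n}
    (hx : pnorm G x = 0) : L x = 0 := by
  have := hL x
  rw [hx, mul_zero] at this
  exact norm_le_zero_iff.1 this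

lemma clm_mask_eq {E : Type*} [NormedAddCommGroup E] [NormedSpace ℝ E]
    {L : (∀ n, X n) →L[ℝ] E} {G : Finset ℕ} {C : ℝ}
    (hL : ∀ x : ∀ n, X n, ‖L x‖ ≤ C * pnorm G x) (x : ∀ n, X n) :
    L x = L (mask G x) := by
  have h0 : L (x - mask G x) = 0 := clm_ker_of_pnorm hL (pnorm_sub_mask G x)
  rw [map_sub, sub_eq_zero] at h0
  exact h0

/-- continuous linear maps commute with coordinatewise interval integrals -/
lemma clm_intervalIntegral {E : Type*} [NormedAddCommGroup E] [NormedSpace ℝ E]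
    [CompleteSpace E] (L : (∀ n, X n) →L[ℝ] E) (f : ℝ → ∀ n, X n) (a b : ℝ)
    (hcont : ∀ n, ContinuousOn (fun s => f s n) (uIcc a b)) :
    L (fun m => ∫ s in a..b, f s m) = ∫ s in a..b, L (f s) := by
  obtain ⟨G, C, hC, hL⟩ := clm_factor L
  set g : ℝ → ∀ i : G, X i := fun s => restr G (f s) with hgdef
  have hgcont : ContinuousOn g (uIcc a b) :=
    continuousOn_pi.2 fun i => hcont i
  have hgint : IntervalIntegrable g MeasureTheory.volume a b :=
    hgcont.intervalIntegrable
  have hrestr : restr G (fun m => ∫ s in a..b, f s m) = ∫ s in a..b, g s := by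
    funext i
    show (∫ s in a..b, f s i) = (∫ s in a..b, g s) i
    calc (∫ s in a..b, f s i)
        = ∫ s in a..b, (ContinuousLinearMap.proj (R := ℝ) (φ := fun i : G => X i) i) (g s) :=
          rfl
      _ = (ContinuousLinearMap.proj (R := ℝ) (φ := fun i : G => X i) i)
            (∫ s in a..b, g s) :=
          ContinuousLinearMap.intervalIntegral_comp_comm _ hgint
      _ = (∫ s in a..b, g s) i := rfl
  have hfac : ∀ y : ∀ n, X n, L y = (L.comp (extL G)) (restr G y) := by
    intro y
    rw [ContinuousLinearMap.comp_apply]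
    exact clm_mask_eq hL y
  rw [hfac, hrestr, ← ContinuousLinearMap.intervalIntegral_comp_comm _ hgint]
  apply intervalIntegral.integral_congr
  intro s hs
  exact (hfac (f s)).symm

section SG

variable (T : ℝ → (∀ n, X n) →L[ℝ] (∀ n, X n))

/-- the coordinatewise integral of the orbit -/
noncomputable def Vt (t : ℝ) (x : ∀ n, X n) : ∀ n, X n :=
  fun m => ∫ s in (0:ℝ)..t, T s x m

variable (horbit : ∀ x : ∀ n, X n, ContinuousOn (fun t : ℝ => T t x) (Set.Ici 0))
variable (hTadd : ∀ s t : ℝ, 0 ≤ s → 0 ≤ t → T (s + t) = (T s).comp (T t))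

section
include horbit

lemma orbit_cont (x : ∀ n, X n) (n : ℕ) :
    ContinuousOn (fun s : ℝ => T s x n) (Ici 0) :=
  (continuous_apply n).comp_continuousOn (horbit x)

lemma orbit_ii (x : ∀ n, X n) (n : ℕ) {a b : ℝ} (hsub : uIcc a b ⊆ Ici 0) :
    IntervalIntegrable (fun s => T s x n) MeasureTheory.volume a b :=
  ((orbit_cont T horbit x n).mono hsub).intervalIntegrable

include hTadd

lemma T_Vt {h t : ℝ} (hh : 0 ≤ h) (ht : 0 ≤ t) (x : ∀ n, X n) (m : ℕ) :
    T h (Vt T t x) m = ∫ s in (0:ℝ)..t, T (h + s) x m := by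
  have huIcc : uIcc (0:ℝ) t = Icc 0 t := uIcc_of_le ht
  have hLHS : T h (Vt T t x) m
      = ((ContinuousLinearMap.proj m : (∀ n, X n) →L[ℝ] X m).comp (T h))
          (fun m' => ∫ s in (0:ℝ)..t, T s x m') := rfl
  rw [hLHS, clm_intervalIntegral _ (fun s => T s x) 0 t
    (fun n => (orbit_cont T horbit x n).mono (by rw [huIcc]; exact Icc_subset_Ici_self))]
  apply intervalIntegral.integral_congr
  intro s hs
  rw [huIcc] at hs
  have : T (h + s) = (T h).comp (T s) := hTadd h s hh hs.1
  simp only [ContinuousLinearMap.comp_apply, ContinuousLinearMap.coe_comp', Function.comp]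
  rw [this]
  rfl

/-- the fundamental commutation identity `(T_h - 1) V_t = (T_t - 1) V_h` -/
lemma TV_identity {h t : ℝ} (hh : 0 ≤ h) (ht : 0 ≤ t) (x : ∀ n, X n) (m : ℕ) :
    T h (Vt T t x) m - Vt T t x m = T t (Vt T h x) m - Vt T h x m := by
  set g : ℝ → X m := fun s => T s x m with hgdef
  have hii : ∀ a b : ℝ, 0 ≤ a → 0 ≤ b → IntervalIntegrable g MeasureTheory.volume a b := by
    intro a b ha hb
    apply orbit_ii T horbit x m
    intro s hs
    rcases le_total a b with hab | hab
    · rw [uIcc_of_le hab] at hs; exact le_trans ha hs.1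
    · rw [uIcc_of_ge hab] at hs; exact le_trans hb hs.1
  have e1 : T h (Vt T t x) m = ∫ s in h..(t+h), g s := by
    rw [T_Vt T horbit hTadd hh ht x m]
    have : ∀ s, T (h + s) x m = g (s + h) := fun s => by rw [hgdef]; ring_nf
    rw [intervalIntegral.integral_congr (g := fun s => g (s + h)) (fun s _ => this s)]
    rw [intervalIntegral.integral_comp_add_right g h, zero_add]
  have e2 : T t (Vt T h x) m = ∫ s in t..(t+h), g s := by
    rw [T_Vt T horbit hTadd ht hh x m]
    have : ∀ s, T (t + s) x m = g (s + t) := fun s => by rw [hgdef]; ring_nf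
    rw [intervalIntegral.integral_congr (g := fun s => g (s + t)) (fun s _ => this s)]
    rw [intervalIntegral.integral_comp_add_right g t, zero_add, add_comm h t]
  have a1 : (∫ s in (0:ℝ)..h, g s) + (∫ s in h..(t+h), g s) = ∫ s in (0:ℝ)..(t+h), g s :=
    intervalIntegral.integral_add_adjacent_intervals (hii 0 h le_rfl hh)
      (hii h (t+h) hh (by linarith))
  have a2 : (∫ s in (0:ℝ)..t, g s) + (∫ s in t..(t+h), g s) = ∫ s in (0:ℝ)..(t+h), g s :=
    intervalIntegral.integral_add_adjacent_intervals (hii 0 t le_rfl ht)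
      (hii t (t+h) ht (by linarith))
  have hV1 : Vt T t x m = ∫ s in (0:ℝ)..t, g s := rfl
  have hV2 : Vt T h x m = ∫ s in (0:ℝ)..h, g s := rfl
  rw [e1, e2, hV1, hV2, sub_eq_sub_iff_add_eq_add]
  have a1' : (∫ s in h..(t+h), g s) + (∫ s in (0:ℝ)..h, g s) = ∫ s in (0:ℝ)..(t+h), g s := by
    rw [add_comm]; exact a1
  have a2' : (∫ s in t..(t+h), g s) + (∫ s in (0:ℝ)..t, g s) = ∫ s in (0:ℝ)..(t+h), g s := by
    rw [add_comm]; exact a2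
  rw [a1', a2']

end

section
include horbit

/-- averaging bound: `h⁻¹ • ∫₀ʰ T_s x ds` is close to `x` coordinatewise -/
lemma avg_bound {h δ c : ℝ} (hh : 0 < h) (hhδ : h < δ) (x : ∀ n, X n) (n : ℕ)
    (hbd : ∀ s, 0 < s → s < δ → ‖T s x n - x n‖ ≤ c) :
    ‖(h⁻¹ • Vt T h x) n - x n‖ ≤ c := by
  have hc : 0 ≤ c := le_trans (norm_nonneg _) (hbd (h/2) (by linarith) (by linarith))
  have hgi : IntervalIntegrable (fun s => T s x n) MeasureTheory.volume 0 h :=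
    orbit_ii T horbit x n (by rw [uIcc_of_le hh.le]; exact Icc_subset_Ici_self)
  have hci : IntervalIntegrable (fun _ : ℝ => x n) MeasureTheory.volume 0 h :=
    intervalIntegrable_const
  have e : Vt T h x n - h • x n = ∫ s in (0:ℝ)..h, (T s x n - x n) := by
    rw [intervalIntegral.integral_sub hgi hci, intervalIntegral.integral_const]
    simp [Vt]
  have hb : ‖∫ s in (0:ℝ)..h, (T s x n - x n)‖ ≤ c * |h - 0| := by
    apply intervalIntegral.norm_integral_le_of_norm_le_const
    intro s hs
    rw [uIoc_of_le hh.le] at hs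
    exact hbd s hs.1 (lt_of_le_of_lt hs.2 hhδ)
  have heq : (h⁻¹ • Vt T h x) n - x n = h⁻¹ • (Vt T h x n - h • x n) := by
    rw [smul_sub, smul_smul, inv_mul_cancel₀ hh.ne', one_smul]
    rfl
  rw [heq, e, norm_smul, norm_inv, Real.norm_eq_abs, abs_of_pos hh]
  rw [sub_zero, abs_of_pos hh] at hb
  calc h⁻¹ * ‖∫ s in (0:ℝ)..h, (T s x n - x n)‖ ≤ h⁻¹ * (c * h) := by
        apply mul_le_mul_of_nonneg_left _ (by positivity)
        simpa using hb
    _ = c := by field_simp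

end

/-- if the row at `m` of every `T_t`, `t ∈ [0,1]`, is supported on `G`, then `T_h - 1`
is insensitive to masking by `G` at coordinate `m`. -/
lemma row_masked {m : ℕ} {G : Finset ℕ} {C : ℝ} (hmG : m ∈ G)
    (hbd : ∀ t ∈ Icc (0:ℝ) 1, ∀ x : ∀ n, X n, ‖T t x m‖ ≤ C * pnorm G x)
    {h : ℝ} (hIcc : h ∈ Icc (0:ℝ) 1) (x : ∀ n, X n) :
    T h x m - x m = T h (mask G x) m - mask G x m := by
  have hsupp : ∀ z : ∀ n, X n, pnorm G z = 0 → T h z m = 0 := by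
    intro z hz
    have := hbd h hIcc z
    rw [hz, mul_zero] at this
    exact norm_le_zero_iff.1 this
  have hd : pnorm G (x - mask G x) = 0 := pnorm_sub_mask G x
  have h1 : T h (x - mask G x) m = 0 := hsupp _ hd
  have h3 : T h x m - T h (mask G x) m = 0 := by
    have e : T h (x - mask G x) = T h x - T h (mask G x) := map_sub _ _ _
    have e2 : (T h x - T h (mask G x)) m = 0 := by rw [← e]; exact h1
    simpa using e2
  have h4 : x m - mask G x m = 0 := by simpa using coord_eq_zero_of_pnorm hd hmG
  rw [sub_eq_zero.1 h3, sub_eq_zero.1 h4]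

section
include horbit hTadd

/-- coordinatewise existence of the generator -/
lemma coord_gen
    (hunif : ∀ B : Set (∀ n, X n), Bornology.IsVonNBounded ℝ B →
      TendstoUniformlyOn (fun (h : ℝ) (x : ∀ n, X n) => T h x)
        (fun x => x) (𝓝[>] 0) B) (m : ℕ) :
    ∃ (W : Finset ℕ) (Λ : (∀ i : W, X i) →L[ℝ] X m),
      ∀ x : ∀ n, X n, Tendsto (fun h : ℝ => h⁻¹ • (T h x m - x m))
        (𝓝[>] 0) (𝓝 (Λ (restr W x))) := by
  classical
  -- data for all coordinates
  have hrs := fun n => row_small T horbit hunif n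
  choose Gf Cf hmem hCf hbdf hsmallf using hrs
  set G : Finset ℕ := Gf m with hGdef
  set C : ℝ := Cf m with hCdef
  have hmG : m ∈ G := hmem m
  have hC0 : 0 ≤ C := hCf m
  have hbd := hbdf m
  -- half-smallness data and the time t₀
  have hsm2 := fun n => hsmallf n (1/2) (by norm_num)
  choose δh hδhpos hδhle hδhbd using hsm2
  have hGne : G.Nonempty := ⟨m, hmG⟩
  set t₀ : ℝ := (G.inf' hGne δh) / 2 with ht₀def
  have ht₀pos : 0 < t₀ := by
    rw [ht₀def]
    have : 0 < G.inf' hGne δh := by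
      rw [Finset.lt_inf'_iff]
      exact fun n _ => hδhpos n
    linarith
  have ht₀lt : ∀ n ∈ G, t₀ < δh n := by
    intro n hn
    have := Finset.inf'_le δh hn
    rw [ht₀def]
    have := hδhpos n
    linarith [Finset.inf'_le δh hn]
  have ht₀le1 : t₀ ≤ 1/2 := by
    rw [ht₀def]
    have := Finset.inf'_le δh hmG
    have := hδhle m
    linarith
  have ht₀Icc : t₀ ∈ Icc (0:ℝ) 1 := ⟨ht₀pos.le, by linarith⟩
  -- the difference-quotient row operators
  set Φ : ℝ → ((∀ i : G, X i) →L[ℝ] X m) := fun h =>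
    h⁻¹ • ((ContinuousLinearMap.proj m).comp (((T h) - 1).comp (extL G))) with hΦdef
  have hΦeval : ∀ h ∈ Icc (0:ℝ) 1, ∀ x : ∀ n, X n,
      Φ h (restr G x) = h⁻¹ • (T h x m - x m) := by
    intro h hh x
    have e1 : Φ h (restr G x) = h⁻¹ • (T h (mask G x) m - mask G x m) := rfl
    rw [e1, ← row_masked T hmG hbd hh x]
  -- row norm bound for T t₀ - 1
  have hrow : ∀ z : ∀ n, X n, ‖T t₀ z m - z m‖ ≤ (C + 1) * pnorm G z := by
    intro z
    calc ‖T t₀ z m - z m‖ ≤ ‖T t₀ z m‖ + ‖z m‖ := norm_sub_le _ _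
      _ ≤ C * pnorm G z + pnorm G z := add_le_add (hbd t₀ ht₀Icc z) (norm_coord_le hmG z)
      _ = (C + 1) * pnorm G z := by ring
  -- the K bound: pnorm G (K x) ≤ (1/2) ‖u‖ for x = extL G u
  have hKbound : ∀ u : ∀ i : G, X i,
      pnorm G ((t₀⁻¹ • Vt T t₀ (extL G u)) - extL G u) ≤ (1/2) * ‖u‖ := by
    intro u
    apply pnorm_le (by positivity)
    intro n hn
    have hb : ∀ s, 0 < s → s < δh n → ‖T s (extL G u) n - extL G u n‖
        ≤ (1/2) * ‖u‖ := by
      intro s hs hsδ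
      calc ‖T s (extL G u) n - extL G u n‖ ≤ (1/2) * pnorm (Gf n) (extL G u) :=
            hδhbd n s hs hsδ _
        _ ≤ (1/2) * ‖u‖ := by
            have := pnorm_extL_le G (Gf n) u
            linarith
    have := avg_bound T horbit ht₀pos (ht₀lt n hn) (extL G u) n hb
    simpa using this
  -- the identity connecting Φ with averages
  have hid : ∀ h, 0 < h → h ≤ 1 → ∀ x : ∀ n, X n,
      Φ h (restr G x) = t₀⁻¹ • (T t₀ (h⁻¹ • Vt T h x) m - (h⁻¹ • Vt T h x) m)
        - Φ h (restr G ((t₀⁻¹ • Vt T t₀ x) - x)) := by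
    intro h hh hh1 x
    set Kx : ∀ n, X n := (t₀⁻¹ • Vt T t₀ x) - x with hKxdef
    have hIcc : h ∈ Icc (0:ℝ) 1 := ⟨hh.le, hh1⟩
    have e1 : Φ h (restr G x) + Φ h (restr G Kx)
        = h⁻¹ • (T h (x + Kx) m - (x + Kx) m) := by
      rw [hΦeval h hIcc x, hΦeval h hIcc Kx]
      have : T h (x + Kx) = T h x + T h Kx := map_add _ _ _
      rw [this]
      simp only [Pi.add_apply, smul_sub, smul_add]
      abel
    have e2 : x + Kx = t₀⁻¹ • Vt T t₀ x := by rw [hKxdef]; abel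
    have e3 : T h (t₀⁻¹ • Vt T t₀ x) = t₀⁻¹ • T h (Vt T t₀ x) := map_smul _ _ _
    have e4 : h⁻¹ • (T h (t₀⁻¹ • Vt T t₀ x) m - (t₀⁻¹ • Vt T t₀ x) m)
        = t₀⁻¹ • (h⁻¹ • (T h (Vt T t₀ x) m - Vt T t₀ x m)) := by
      rw [e3]
      show h⁻¹ • (t₀⁻¹ • T h (Vt T t₀ x) m - t₀⁻¹ • Vt T t₀ x m) = _
      rw [← smul_sub, smul_comm]
    have e5 : T h (Vt T t₀ x) m - Vt T t₀ x m = T t₀ (Vt T h x) m - Vt T h x m :=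
      TV_identity T horbit hTadd hh.le ht₀pos.le x m
    have e6 : h⁻¹ • (T t₀ (Vt T h x) m - Vt T h x m)
        = T t₀ (h⁻¹ • Vt T h x) m - (h⁻¹ • Vt T h x) m := by
      have : T t₀ (h⁻¹ • Vt T h x) = h⁻¹ • T t₀ (Vt T h x) := map_smul _ _ _
      rw [this]
      show _ = h⁻¹ • T t₀ (Vt T h x) m - h⁻¹ • Vt T h x m
      rw [smul_sub]
    have := e1
    rw [e2] at this
    rw [eq_sub_iff_add_eq, this, e4, e5, ← e6]
  -- the Cauchy estimate
  have hCauchy : ∀ ε > 0, ∃ δ > 0, δ ≤ t₀ ∧ ∀ h h' : ℝ, 0 < h → h < δ → 0 < h' → h' < δ →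
      ‖Φ h - Φ h'‖ ≤ ε := by
    intro ε hε
    set ε₁ : ℝ := ε * t₀ / (8 * (C + 1)) with hε₁def
    have hε₁pos : 0 < ε₁ := by rw [hε₁def]; positivity
    have hsm1 := fun n => hsmallf n ε₁ hε₁pos
    choose δf hδfpos hδfle hδfbd using hsm1
    set δ : ℝ := min t₀ (G.inf' hGne δf) with hδdef
    have hδpos : 0 < δ := by
      rw [hδdef, lt_min_iff]
      refine ⟨ht₀pos, ?_⟩
      rw [Finset.lt_inf'_iff]
      exact fun n _ => hδfpos n
    have hδt₀ : δ ≤ t₀ := min_le_left _ _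
    refine ⟨δ, hδpos, hδt₀, fun h h' hh hhδ hh' hh'δ => ?_⟩
    have hδf' : ∀ n ∈ G, δ ≤ δf n := fun n hn =>
      le_trans (min_le_right _ _) (Finset.inf'_le δf hn)
    have hh1 : h ≤ 1 := by linarith [hδt₀, ht₀le1]
    have hh'1 : h' ≤ 1 := by linarith [hδt₀, ht₀le1]
    set E := Φ h - Φ h' with hEdef
    -- the w-closeness bound
    have hwbound : ∀ (g : ℝ), 0 < g → g < δ → ∀ u : ∀ i : G, X i,
        pnorm G ((g⁻¹ • Vt T g (extL G u)) - extL G u) ≤ ε₁ * ‖u‖ := by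
      intro g hg hgδ u
      apply pnorm_le (by positivity)
      intro n hn
      have hb : ∀ s, 0 < s → s < δf n → ‖T s (extL G u) n - extL G u n‖ ≤ ε₁ * ‖u‖ := by
        intro s hs hsδ
        calc ‖T s (extL G u) n - extL G u n‖ ≤ ε₁ * pnorm (Gf n) (extL G u) :=
              hδfbd n s hs hsδ _
          _ ≤ ε₁ * ‖u‖ := by
              have := pnorm_extL_le G (Gf n) u
              nlinarith
      have := avg_bound T horbit hg (lt_of_lt_of_le hgδ (hδf' n hn)) (extL G u) n hb
      simpa using this
    -- bound ‖E u‖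
    have hEu : ∀ u : ∀ i : G, X i,
        ‖E u‖ ≤ (t₀⁻¹ * ((C+1) * (2 * ε₁)) + (1/2) * ‖E‖) * ‖u‖ := by
      intro u
      set x : ∀ n, X n := extL G u with hxdef
      have hru : restr G x = u := restr_extL G u
      set w : ∀ n, X n := h⁻¹ • Vt T h x with hwdef
      set w' : ∀ n, X n := h'⁻¹ • Vt T h' x with hw'def
      set Kx : ∀ n, X n := (t₀⁻¹ • Vt T t₀ x) - x with hKxdef
      have hidh := hid h hh hh1 x
      have hidh' := hid h' hh' hh'1 x
      have hEux : E u = (t₀⁻¹ • (T t₀ w m - w m) - t₀⁻¹ • (T t₀ w' m - w' m))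
          - E (restr G Kx) := by
        rw [hEdef]
        show Φ h u - Φ h' u = _
        rw [← hru, hidh, hidh']
        show _ = _ - (Φ h (restr G Kx) - Φ h' (restr G Kx))
        abel
      have hdiff : t₀⁻¹ • (T t₀ w m - w m) - t₀⁻¹ • (T t₀ w' m - w' m)
          = t₀⁻¹ • (T t₀ (w - w') m - (w - w') m) := by
        have : T t₀ (w - w') = T t₀ w - T t₀ w' := map_sub _ _ _
        rw [this]
        simp only [Pi.sub_apply, smul_sub]
        abel
      have hwsub : pnorm G (w - w') ≤ 2 * (ε₁ * ‖u‖) := by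
        have h1 := hwbound h hh hhδ u
        have h2 := hwbound h' hh' hh'δ u
        have : w - w' = (w - x) - (w' - x) := by abel
        rw [this]
        calc pnorm G ((w - x) - (w' - x)) ≤ pnorm G (w - x) + pnorm G (w' - x) :=
              pnorm_sub_le _ _ _
          _ ≤ 2 * (ε₁ * ‖u‖) := by
              rw [hwdef, hw'def, hxdef]
              have := h1; have := h2
              linarith [h1, h2]
      have hterm1 : ‖t₀⁻¹ • (T t₀ (w - w') m - (w - w') m)‖
          ≤ t₀⁻¹ * ((C+1) * (2 * (ε₁ * ‖u‖))) := by
        rw [norm_smul, norm_inv, Real.norm_eq_abs, abs_of_pos ht₀pos]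
        apply mul_le_mul_of_nonneg_left _ (by positivity)
        calc ‖T t₀ (w - w') m - (w - w') m‖ ≤ (C+1) * pnorm G (w - w') := hrow _
          _ ≤ (C+1) * (2 * (ε₁ * ‖u‖)) := by nlinarith [hwsub]
      have hterm2 : ‖E (restr G Kx)‖ ≤ (1/2) * ‖E‖ * ‖u‖ := by
        calc ‖E (restr G Kx)‖ ≤ ‖E‖ * ‖restr G Kx‖ := ContinuousLinearMap.le_opNorm _ _
          _ = ‖E‖ * pnorm G Kx := by rw [norm_restr]
          _ ≤ ‖E‖ * ((1/2) * ‖u‖) := by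
              apply mul_le_mul_of_nonneg_left _ (norm_nonneg E)
              rw [hKxdef, hxdef]
              exact hKbound u
          _ = (1/2) * ‖E‖ * ‖u‖ := by ring
      calc ‖E u‖ = ‖(t₀⁻¹ • (T t₀ w m - w m) - t₀⁻¹ • (T t₀ w' m - w' m))
              - E (restr G Kx)‖ := by rw [hEux]
        _ ≤ ‖t₀⁻¹ • (T t₀ w m - w m) - t₀⁻¹ • (T t₀ w' m - w' m)‖
              + ‖E (restr G Kx)‖ := norm_sub_le _ _
        _ ≤ t₀⁻¹ * ((C+1) * (2 * (ε₁ * ‖u‖))) + (1/2) * ‖E‖ * ‖u‖ := by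
            rw [hdiff]
            exact add_le_add hterm1 hterm2
        _ = (t₀⁻¹ * ((C+1) * (2 * ε₁)) + (1/2) * ‖E‖) * ‖u‖ := by ring
    have hEop : ‖E‖ ≤ t₀⁻¹ * ((C+1) * (2 * ε₁)) + (1/2) * ‖E‖ :=
      ContinuousLinearMap.opNorm_le_bound _ (by positivity) hEu
    have hc₁ : t₀⁻¹ * ((C+1) * (2 * ε₁)) = ε / 4 := by
      rw [hε₁def]
      field_simp
      ring
    rw [hc₁] at hEop
    linarith
  -- Cauchy filter, hence a limit
  have hNeBot : (𝓝[>] (0:ℝ)).NeBot := nhdsGT_neBot 0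
  have hcauchy : Cauchy ((𝓝[>] (0:ℝ)).map Φ) := by
    rw [Metric.cauchy_iff]
    constructor
    · exact Filter.map_neBot
    · intro ε hε
      obtain ⟨δ, hδpos, hδt₀, hC⟩ := hCauchy (ε/2) (by linarith)
      refine ⟨Φ '' (Ioo 0 δ), Filter.image_mem_map ?_, ?_⟩
      · exact Ioo_mem_nhdsGT_of_mem ⟨le_rfl, hδpos⟩
      · rintro a ⟨h, hh, rfl⟩ b ⟨h', hh', rfl⟩
        rw [dist_eq_norm]
        calc ‖Φ h - Φ h'‖ ≤ ε/2 := hC h h' hh.1 hh.2 hh'.1 hh'.2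
          _ < ε := by linarith
  obtain ⟨Λ, hΛ⟩ := CompleteSpace.complete hcauchy
  refine ⟨G, Λ, fun x => ?_⟩
  have hΛten : Tendsto Φ (𝓝[>] (0:ℝ)) (𝓝 Λ) := hΛ
  have h1 : Tendsto (fun h => Φ h (restr G x)) (𝓝[>] (0:ℝ)) (𝓝 (Λ (restr G x))) := by
    have hc : Continuous (fun M : (∀ i : G, X i) →L[ℝ] X m => M (restr G x)) :=
      (ContinuousLinearMap.apply ℝ (X m) (restr G x)).continuous
    exact (hc.tendsto Λ).comp hΛten
  apply h1.congr'
  filter_upwards [Ioo_mem_nhdsGT_of_mem (⟨le_rfl, zero_lt_one⟩ : (0:ℝ) ∈ Ico 0 1)]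
    with h hh
  exact hΦeval h ⟨hh.1.le, hh.2.le⟩ x

end

section
include horbit hTadd

/-- the generator exists -/
lemma gen_exists
    (hunif : ∀ B : Set (∀ n, X n), Bornology.IsVonNBounded ℝ B →
      TendstoUniformlyOn (fun (h : ℝ) (x : ∀ n, X n) => T h x)
        (fun x => x) (𝓝[>] 0) B) :
    ∃ A : (∀ n, X n) →L[ℝ] (∀ n, X n),
      ∀ x : ∀ n, X n, Tendsto (fun h : ℝ => h⁻¹ • (T h x - x)) (𝓝[>] 0) (𝓝 (A x)) := by
  have hc := fun m => coord_gen T horbit hTadd hunif m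
  choose W Λ hWΛ using hc
  refine ⟨ContinuousLinearMap.pi (fun m => (Λ m).comp (restr (W m))), fun x => ?_⟩
  rw [tendsto_pi_nhds]
  intro m
  exact hWΛ m x

end

section
variable (A : (∀ n, X n) →L[ℝ] (∀ n, X n))
variable (hA : ∀ x : ∀ n, X n,
  Tendsto (fun h : ℝ => h⁻¹ • (T h x - x)) (𝓝[>] 0) (𝓝 (A x)))

include hTadd hA

/-- one-sided differentiability of orbits composed with continuous linear maps -/
lemma deriv_right {E : Type*} [NormedAddCommGroup E] [NormedSpace ℝ E]
    (L : (∀ n, X n) →L[ℝ] E) (x : ∀ n, X n) {t : ℝ} (ht : 0 ≤ t) :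
    HasDerivWithinAt (fun s => L (T s x)) (L (A (T t x))) (Ioi t) t := by
  rw [hasDerivWithinAt_iff_tendsto_slope]
  have hsub : Ioi t \ {t} = Ioi t :=
    diff_singleton_eq_self (notMem_Ioi.2 le_rfl)
  rw [hsub]
  have hmap : Tendsto (fun u : ℝ => u - t) (𝓝[Ioi t] t) (𝓝[>] (0:ℝ)) := by
    apply tendsto_nhdsWithin_of_tendsto_nhds_of_eventually_within
    · have h1 : Tendsto (fun u : ℝ => u - t) (𝓝 t) (𝓝 (t - t)) :=
        (continuous_id.sub continuous_const).tendsto t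
      rw [sub_self] at h1
      exact h1.mono_left nhdsWithin_le_nhds
    · filter_upwards [self_mem_nhdsWithin] with u hu
      exact sub_pos.2 (mem_Ioi.1 hu)
  have hkey := hA (T t x)
  have hLkey : Tendsto (fun h : ℝ => L (h⁻¹ • (T h (T t x) - T t x)))
      (𝓝[>] (0:ℝ)) (𝓝 (L (A (T t x)))) := (L.continuous.tendsto _).comp hkey
  have hcomp := hLkey.comp hmap
  apply hcomp.congr'
  filter_upwards [self_mem_nhdsWithin] with u hu
  have hu' : t < u := hu
  have hTu : T (u - t) (T t x) = T u x := by
    have := hTadd (u - t) t (by linarith) ht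
    rw [sub_add_cancel] at this
    rw [this]
    rfl
  show L ((u - t)⁻¹ • (T (u - t) (T t x) - T t x)) = slope (fun s => L (T s x)) t u
  rw [slope_def_module, map_smul, map_sub, hTu]

include horbit

/-- fundamental theorem of calculus along the orbit -/
lemma ftc_L {E : Type*} [NormedAddCommGroup E] [NormedSpace ℝ E] [CompleteSpace E]
    (L : (∀ n, X n) →L[ℝ] E) (x : ∀ n, X n) {a b : ℝ} (ha : 0 ≤ a) (hab : a ≤ b) :
    ∫ s in a..b, L (A (T s x)) = L (T b x) - L (T a x) := by
  have hsubset : Icc a b ⊆ Ici (0:ℝ) := fun s hs => le_trans ha hs.1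
  apply intervalIntegral.integral_eq_sub_of_hasDeriv_right_of_le hab
  · exact (L.continuous.comp_continuousOn (horbit x)).mono hsubset
  · intro s hs
    exact deriv_right T hTadd A hA L x (le_trans ha hs.1.le)
  · apply ContinuousOn.intervalIntegrable
    have : ContinuousOn (fun s => (L.comp A) (T s x)) (uIcc a b) :=
      ((L.comp A).continuous.comp_continuousOn (horbit x)).mono
        (by rw [uIcc_of_le hab]; exact hsubset)
    exact this

end

section
variable (A : (∀ n, X n) →L[ℝ] (∀ n, X n))
variable (hA : ∀ x : ∀ n, X n,
  Tendsto (fun h : ℝ => h⁻¹ • (T h x - x)) (𝓝[>] 0) (𝓝 (A x)))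
variable (hT0 : T 0 = ContinuousLinearMap.id ℝ (∀ n, X n))

include horbit hTadd hA

lemma pow_apply_aux (k : ℕ) (y : ∀ n, X n) : (A ^ (k+1)) y = (A ^ k) (A y) := by
  rw [pow_succ]
  rfl

lemma ftc_coord (m : ℕ) (k : ℕ) (x : ∀ n, X n) {a b : ℝ} (ha : 0 ≤ a) (hab : a ≤ b) :
    ∫ s in a..b, (A ^ (k+1)) (T s x) m = (A ^ k) (T b x) m - (A ^ k) (T a x) m := by
  have := ftc_L T horbit hTadd A hA
    ((ContinuousLinearMap.proj m).comp (A ^ k)) x ha hab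
  have he : ∀ s : ℝ, ((ContinuousLinearMap.proj (R := ℝ) (φ := X) m).comp (A ^ k)) (A (T s x))
      = (A ^ (k+1)) (T s x) m := by
    intro s
    show (A ^ k) (A (T s x)) m = (A ^ (k+1)) (T s x) m
    rw [pow_apply_aux T horbit hTadd A hA]
  rw [intervalIntegral.integral_congr (g := fun s => (A ^ (k+1)) (T s x) m)
    (fun s _ => he s)] at this
  exact this

include hT0

lemma zero_chain {m : ℕ} {H : Finset ℕ} {CH : ℝ} (hmH : m ∈ H)
    (hbd : ∀ t ∈ Icc (0:ℝ) 1, ∀ x : ∀ n, X n, ‖T t x m‖ ≤ CH * pnorm H x)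
    {x : ∀ n, X n} (hx : pnorm H x = 0) : ∀ k, (A ^ k) x m = 0 := by
  set φ : ℕ → ℝ → X m := fun k t => (A ^ k) (T t x) m with hφdef
  have hφcont : ∀ k, ContinuousOn (φ k) (Ici 0) := fun k =>
    ((continuous_apply m).comp (A ^ k).continuous).comp_continuousOn (horbit x)
  have hmain : ∀ k, ∀ t ∈ Ico (0:ℝ) 1, φ k t = 0 := by
    intro k
    induction k with
    | zero =>
      intro t ht
      have hsupp := hbd t ⟨ht.1, ht.2.le⟩ x
      rw [hx, mul_zero] at hsupp
      have : T t x m = 0 := norm_le_zero_iff.1 hsupp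
      simpa [hφdef] using this
    | succ k ih =>
      have hF0 : ∀ t ∈ Ico (0:ℝ) 1, (∫ s in (0:ℝ)..t, φ (k+1) s) = 0 := by
        intro t ht
        rw [hφdef]
        rw [ftc_coord T horbit hTadd A hA m k x le_rfl ht.1]
        have h1 := ih t ht
        have h2 := ih 0 ⟨le_rfl, zero_lt_one⟩
        simp only [hφdef] at h1 h2
        rw [h1, h2, sub_zero]
      have hint : ∀ t : ℝ, 0 ≤ t → IntervalIntegrable (φ (k+1))
          MeasureTheory.volume 0 t := by
        intro t ht
        apply ContinuousOn.intervalIntegrable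
        exact (hφcont (k+1)).mono (by rw [uIcc_of_le ht]; exact Icc_subset_Ici_self)
      have hinterior : ∀ t' ∈ Ioo (0:ℝ) 1, φ (k+1) t' = 0 := by
        intro t' ht'
        have hmeas : StronglyMeasurableAtFilter (φ (k+1)) (𝓝 t') MeasureTheory.volume := by
          refine ⟨Ioi 0, Ioi_mem_nhds ht'.1, ?_⟩
          exact ((hφcont (k+1)).mono Ioi_subset_Ici_self).aestronglyMeasurable
            measurableSet_Ioi
        have hca : ContinuousAt (φ (k+1)) t' :=
          (hφcont (k+1)).continuousAt (Ici_mem_nhds ht'.1)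
        have hD : HasDerivAt (fun t => ∫ s in (0:ℝ)..t, φ (k+1) s) (φ (k+1) t') t' :=
          intervalIntegral.integral_hasDerivAt_right (hint t' ht'.1.le) hmeas hca
        have hzero : HasDerivAt (fun t => ∫ s in (0:ℝ)..t, φ (k+1) s) 0 t' := by
          apply (hasDerivAt_const t' (0 : X m)).congr_of_eventuallyEq
          filter_upwards [Ioo_mem_nhds ht'.1 ht'.2] with u hu
          exact hF0 u ⟨hu.1.le, hu.2⟩
        exact hD.unique hzero
      intro t ht
      rcases eq_or_lt_of_le ht.1 with h0 | h0
      · -- t = 0 : by one-sided continuity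
        have h1 : Tendsto (φ (k+1)) (𝓝[>] (0:ℝ)) (𝓝 (φ (k+1) 0)) := by
          have := (hφcont (k+1)) 0 self_mem_Ici
          exact this.tendsto.mono_left (nhdsWithin_mono _ Ioi_subset_Ici_self)
        have h2 : Tendsto (φ (k+1)) (𝓝[>] (0:ℝ)) (𝓝 0) := by
          apply Tendsto.congr' _ tendsto_const_nhds
          filter_upwards [Ioo_mem_nhdsGT_of_mem
            (⟨le_rfl, zero_lt_one⟩ : (0:ℝ) ∈ Ico 0 1)] with u hu
          exact (hinterior u hu).symm
        rw [← h0]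
        exact tendsto_nhds_unique h1 h2
      · exact hinterior t ⟨h0, ht.2⟩
  intro k
  have := hmain k 0 ⟨le_rfl, zero_lt_one⟩
  rw [hφdef] at this
  simp only [hT0] at this
  simpa using this

/-- geometric bound on the rows of powers of the generator -/
lemma pow_norm_bound {m : ℕ} {H : Finset ℕ} {CH : ℝ} (hmH : m ∈ H)
    (hbd : ∀ t ∈ Icc (0:ℝ) 1, ∀ x : ∀ n, X n, ‖T t x m‖ ≤ CH * pnorm H x) :
    ∃ a : ℝ, 0 ≤ a ∧ ∀ k, ∀ y : ∀ n, X n, ‖(A ^ k) y m‖ ≤ a ^ k * pnorm H y := by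
  classical
  have hAr := fun n => clm_factor ((ContinuousLinearMap.proj (R := ℝ) (φ := X) n).comp A)
  choose Wf Cf hCf hArb using hAr
  set a : ℝ := ∑ n ∈ H, Cf n with hadef
  have ha0 : 0 ≤ a := Finset.sum_nonneg fun n _ => hCf n
  have haC : ∀ n ∈ H, Cf n ≤ a := fun n hn =>
    Finset.single_le_sum (fun i _ => hCf i) hn
  have hstep : ∀ y : ∀ n, X n, pnorm H (A (mask H y)) ≤ a * pnorm H y := by
    intro y
    apply pnorm_le (mul_nonneg ha0 (pnorm_nonneg H y))
    intro n hn
    calc ‖A (mask H y) n‖ ≤ Cf n * pnorm (Wf n) (mask H y) := hArb n _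
      _ ≤ Cf n * pnorm H y :=
          mul_le_mul_of_nonneg_left (pnorm_mask_le H (Wf n) y) (hCf n)
      _ ≤ a * pnorm H y :=
          mul_le_mul_of_nonneg_right (haC n hn) (pnorm_nonneg _ _)
  refine ⟨a, ha0, ?_⟩
  intro k
  induction k with
  | zero =>
    intro y
    simpa using norm_coord_le hmH y
  | succ k ih =>
    intro y
    have hmaskeq : (A ^ (k+1)) y m = (A ^ (k+1)) (mask H y) m := by
      have h0 : pnorm H (y - mask H y) = 0 := pnorm_sub_mask H y
      have hz := zero_chain T horbit hTadd A hA hT0 hmH hbd h0 (k+1)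
      have : ((A ^ (k+1)) y - (A ^ (k+1)) (mask H y)) m = 0 := by
        rw [← map_sub]
        exact hz
      have := sub_eq_zero.1 (by simpa only [Pi.sub_apply] using this)
      exact this
    rw [hmaskeq, pow_apply_aux T horbit hTadd A hA]
    calc ‖(A ^ k) (A (mask H y)) m‖ ≤ a ^ k * pnorm H (A (mask H y)) := ih _
      _ ≤ a ^ k * (a * pnorm H y) :=
          mul_le_mul_of_nonneg_left (hstep y) (pow_nonneg ha0 k)
      _ = a ^ (k+1) * pnorm H y := by ring

end

section
variable (A : (∀ n, X n) →L[ℝ] (∀ n, X n))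
variable (hA : ∀ x : ∀ n, X n,
  Tendsto (fun h : ℝ => h⁻¹ • (T h x - x)) (𝓝[>] 0) (𝓝 (A x)))
variable (hT0 : T 0 = ContinuousLinearMap.id ℝ (∀ n, X n))

include horbit hTadd hA hT0

lemma taylor_exp (m : ℕ) (x : ∀ n, X n) {t : ℝ} (ht : 0 ≤ t) : ∀ N : ℕ,
    T t x m = (∑ k ∈ Finset.range (N+1), (t ^ k / (Nat.factorial k : ℝ)) • (A ^ k) x m)
      + ∫ s in (0:ℝ)..t, ((t - s) ^ N / (Nat.factorial N : ℝ)) • (A ^ (N+1)) (T s x) m := by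
  have hφcont : ∀ j : ℕ, ContinuousOn (fun s : ℝ => (A ^ j) (T s x) m) (Ici 0) := fun j =>
    ((continuous_apply m).comp (A ^ j).continuous).comp_continuousOn (horbit x)
  have hIccIci : Icc (0:ℝ) t ⊆ Ici 0 := fun s hs => hs.1
  have huIcc : uIcc (0:ℝ) t = Icc 0 t := uIcc_of_le ht
  have hscont : ∀ c : ℝ, ∀ M : ℕ, Continuous (fun s : ℝ => (t - s) ^ M / c) :=
    fun c M => ((continuous_const.sub continuous_id).pow M).div_const c
  have hint : ∀ c : ℝ, ∀ M j : ℕ, IntervalIntegrable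
      (fun s : ℝ => ((t - s) ^ M / c) • (A ^ j) (T s x) m) MeasureTheory.volume 0 t := by
    intro c M j
    apply ContinuousOn.intervalIntegrable
    rw [huIcc]
    exact ((hscont c M).continuousOn).smul ((hφcont j).mono hIccIci)
  intro N
  induction N with
  | zero =>
    have h1 : (∫ s in (0:ℝ)..t, ((t - s) ^ 0 / (Nat.factorial 0 : ℝ)) • (A ^ (0+1)) (T s x) m)
        = ∫ s in (0:ℝ)..t, (A ^ (0+1)) (T s x) m := by
      apply intervalIntegral.integral_congr
      intro s _
      simp
    rw [h1]
    have h2 := ftc_coord T horbit hTadd A hA m 0 x le_rfl ht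
    rw [h2]
    simp [hT0]
  | succ N ih =>
    rw [ih]
    have key : (∫ s in (0:ℝ)..t, ((t - s) ^ N / (Nat.factorial N : ℝ)) • (A ^ (N+1)) (T s x) m)
        = (t ^ (N+1) / (Nat.factorial (N+1) : ℝ)) • (A ^ (N+1)) x m
          + ∫ s in (0:ℝ)..t,
              ((t - s) ^ (N+1) / (Nat.factorial (N+1) : ℝ)) • (A ^ (N+1+1)) (T s x) m := by
      set φ1 : ℝ → X m := fun s => (A ^ (N+1)) (T s x) m with hφ1
      set φ2 : ℝ → X m := fun s => (A ^ (N+1+1)) (T s x) m with hφ2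
      set c : ℝ → ℝ := fun s => -((t - s) ^ (N+1) / (Nat.factorial (N+1) : ℝ)) with hcdef
      set ψ : ℝ → X m := fun s => c s • φ1 s with hψdef
      have hψderiv : ∀ s ∈ Ioo (0:ℝ) t, HasDerivWithinAt ψ
          (c s • φ2 s + ((t - s) ^ N / (Nat.factorial N : ℝ)) • φ1 s) (Ioi s) s := by
        intro s hs
        have h1 : HasDerivAt (fun u : ℝ => t - u) (-1) s := by
          simpa using (hasDerivAt_id s).const_sub t
        have h2 := h1.pow (N+1)
        have h3 := (h2.div_const (Nat.factorial (N+1) : ℝ)).neg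
        have hc' : HasDerivAt c ((t - s) ^ N / (Nat.factorial N : ℝ)) s := by
          refine HasDerivAt.congr_deriv h3 ?_
          have hfac : (Nat.factorial (N+1) : ℝ) = (N+1) * Nat.factorial N := by
            rw [Nat.factorial_succ]; push_cast; ring
          have hNn : (N+1 : ℕ) - 1 = N := rfl
          rw [hNn, hfac]
          have hfa : (Nat.factorial N : ℝ) ≠ 0 := Nat.cast_ne_zero.2 (Nat.factorial_ne_zero N)
          field_simp
          push_cast; ring
        have hv : HasDerivWithinAt φ1 (φ2 s) (Ioi s) s := by
          have hd := deriv_right T hTadd A hA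
            ((ContinuousLinearMap.proj (R := ℝ) (φ := X) m).comp (A ^ (N+1))) x hs.1.le
          have he : ((ContinuousLinearMap.proj (R := ℝ) (φ := X) m).comp (A ^ (N+1)))
              (A (T s x)) = φ2 s := by
            show (A ^ (N+1)) (A (T s x)) m = (A ^ (N+1+1)) (T s x) m
            rw [pow_apply_aux T horbit hTadd A hA (N+1) (T s x)]
          rw [he] at hd
          exact hd
        exact (hc'.hasDerivWithinAt).smul hv
      have hψcont : ContinuousOn ψ (Icc 0 t) := by
        apply ContinuousOn.smul
        · exact (((hscont (Nat.factorial (N+1) : ℝ) (N+1)).neg).continuousOn)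
        · exact (hφcont (N+1)).mono hIccIci
      have hi2 : IntervalIntegrable (fun s => c s • φ2 s) MeasureTheory.volume 0 t := by
        apply ContinuousOn.intervalIntegrable
        rw [huIcc]
        exact (((hscont (Nat.factorial (N+1) : ℝ) (N+1)).neg).continuousOn).smul
          ((hφcont (N+1+1)).mono hIccIci)
      have hi1 : IntervalIntegrable
          (fun s => ((t - s) ^ N / (Nat.factorial N : ℝ)) • φ1 s)
          MeasureTheory.volume 0 t := hint (Nat.factorial N : ℝ) N (N+1)
      have hii : IntervalIntegrable
          (fun s => c s • φ2 s + ((t - s) ^ N / (Nat.factorial N : ℝ)) • φ1 s)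
          MeasureTheory.volume 0 t := hi2.add hi1
      have hftc := intervalIntegral.integral_eq_sub_of_hasDeriv_right_of_le ht hψcont
        hψderiv hii
      have hψt : ψ t = 0 := by
        show c t • φ1 t = 0
        rw [hcdef]
        simp
      have hψ0 : ψ 0 = -((t ^ (N+1) / (Nat.factorial (N+1) : ℝ)) • (A ^ (N+1)) x m) := by
        show c 0 • φ1 0 = _
        rw [hcdef, hφ1]
        simp [hT0]
      have hsplit : (∫ s in (0:ℝ)..t, (c s • φ2 s
            + ((t - s) ^ N / (Nat.factorial N : ℝ)) • φ1 s))
          = (∫ s in (0:ℝ)..t, c s • φ2 s)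
            + ∫ s in (0:ℝ)..t, ((t - s) ^ N / (Nat.factorial N : ℝ)) • φ1 s :=
        intervalIntegral.integral_add hi2 hi1
      have hneg : (∫ s in (0:ℝ)..t, c s • φ2 s)
          = -∫ s in (0:ℝ)..t, ((t - s) ^ (N+1) / (Nat.factorial (N+1) : ℝ)) • φ2 s := by
        rw [← intervalIntegral.integral_neg]
        apply intervalIntegral.integral_congr
        intro s _
        show (-((t - s) ^ (N+1) / (Nat.factorial (N+1) : ℝ))) • φ2 s
          = -(((t - s) ^ (N+1) / (Nat.factorial (N+1) : ℝ)) • φ2 s)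
        rw [neg_smul]
      rw [hsplit, hψt, hψ0, hneg] at hftc
      set I1 := ∫ s in (0:ℝ)..t, ((t - s) ^ N / (Nat.factorial N : ℝ)) • φ1 s with hI1
      set I2 := ∫ s in (0:ℝ)..t,
        ((t - s) ^ (N+1) / (Nat.factorial (N+1) : ℝ)) • φ2 s with hI2
      set R := (t ^ (N+1) / (Nat.factorial (N+1) : ℝ)) • (A ^ (N+1)) x m with hR
      calc I1 = (-I2 + I1) + I2 := by abel
        _ = (0 - -R) + I2 := by rw [hftc]
        _ = R + I2 := by abel
    rw [key]
    have hs2 : ∑ k ∈ Finset.range (N+1+1), (t ^ k / (Nat.factorial k : ℝ)) • (A ^ k) x m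
        = (∑ k ∈ Finset.range (N+1), (t ^ k / (Nat.factorial k : ℝ)) • (A ^ k) x m)
          + (t ^ (N+1) / (Nat.factorial (N+1) : ℝ)) • (A ^ (N+1)) x m :=
      Finset.sum_range_succ _ _
    rw [hs2]
    abel

end

end SG

end Stmt15

/-- For a countable product `X = ∏ₙ Xₙ` of real Banach spaces,
every uniformly continuous semigroup on `X` has an everywhere defined
continuous linear generator `A`, and `T_t x = ∑_{k=0}^∞ (t^k/k!) • A^k x`. -/
theorem stmt15 {X : ℕ → Type*} [∀ n, NormedAddCommGroup (X n)]
    [∀ n, NormedSpace ℝ (X n)] [∀ n, CompleteSpace (X n)]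
    (T : ℝ → (∀ n, X n) →L[ℝ] (∀ n, X n))
    (hT0 : T 0 = ContinuousLinearMap.id ℝ (∀ n, X n))
    (hTadd : ∀ s t : ℝ, 0 ≤ s → 0 ≤ t → T (s + t) = (T s).comp (T t))
    (horbit : ∀ x : ∀ n, X n, ContinuousOn (fun t : ℝ => T t x) (Set.Ici 0))
    (hunif : ∀ B : Set (∀ n, X n), Bornology.IsVonNBounded ℝ B →
      TendstoUniformlyOn (fun (h : ℝ) (x : ∀ n, X n) => T h x)
        (fun x => x) (𝓝[>] 0) B) :
    ∃ A : (∀ n, X n) →L[ℝ] (∀ n, X n),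
      (∀ x : ∀ n, X n,
        Tendsto (fun h : ℝ => h⁻¹ • (T h x - x)) (𝓝[>] 0) (𝓝 (A x))) ∧
      ∀ x : ∀ n, X n, ∀ t : ℝ, 0 ≤ t →
        Tendsto (fun N : ℕ => ∑ k ∈ Finset.range N,
            (t ^ k / (Nat.factorial k : ℝ)) • (A ^ k) x) atTop (𝓝 (T t x)) := by
  classical
  obtain ⟨A, hA⟩ := Stmt15.gen_exists T horbit hTadd hunif
  refine ⟨A, hA, ?_⟩
  intro x t ht
  rw [tendsto_pi_nhds]
  intro m
  obtain ⟨H, CH, hmH, hCH0, hbd⟩ := Stmt15.row_bound T horbit m 1 zero_le_one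
  obtain ⟨a, ha0, hpow⟩ := Stmt15.pow_norm_bound T horbit hTadd A hA hT0 hmH hbd
  -- uniform bound for `pnorm H (T s x)` on `[0, t]`
  obtain ⟨M, hM0, hMb⟩ : ∃ M, 0 ≤ M ∧ ∀ s ∈ Icc (0:ℝ) t, Stmt15.pnorm H (T s x) ≤ M := by
    have h1 := fun n => Stmt15.row_bound T horbit n t ht
    choose Hf Cf hmemf hCf0 hbdf using h1
    set HH := H.biUnion Hf with hHH
    have hsum0 : (0:ℝ) ≤ ∑ n ∈ H, Cf n := Finset.sum_nonneg fun i _ => hCf0 i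
    refine ⟨(∑ n ∈ H, Cf n) * Stmt15.pnorm HH x,
      mul_nonneg hsum0 (Stmt15.pnorm_nonneg _ _), ?_⟩
    intro s hs
    apply Stmt15.pnorm_le (mul_nonneg hsum0 (Stmt15.pnorm_nonneg _ _))
    intro n hn
    calc ‖T s x n‖ ≤ Cf n * Stmt15.pnorm (Hf n) x := hbdf n s hs x
      _ ≤ (∑ n' ∈ H, Cf n') * Stmt15.pnorm HH x := by
          apply mul_le_mul (Finset.single_le_sum (fun i _ => hCf0 i) hn)
            (Stmt15.pnorm_mono (Finset.subset_biUnion_of_mem Hf hn) x)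
            (Stmt15.pnorm_nonneg _ _) hsum0
  -- bound on the Taylor remainder
  have hrem : ∀ N : ℕ,
      ‖∫ s in (0:ℝ)..t, ((t - s) ^ N / (Nat.factorial N : ℝ)) • (A ^ (N+1)) (T s x) m‖
        ≤ (a * M * t) * ((a * t) ^ N / (Nat.factorial N : ℝ)) := by
    intro N
    have hfac0 : (0:ℝ) < (Nat.factorial N : ℝ) :=
      Nat.cast_pos.2 (Nat.factorial_pos N)
    have hbnd : ∀ s ∈ Set.uIoc (0:ℝ) t,
        ‖((t - s) ^ N / (Nat.factorial N : ℝ)) • (A ^ (N+1)) (T s x) m‖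
          ≤ (t ^ N / (Nat.factorial N : ℝ)) * (a ^ (N+1) * M) := by
      intro s hs
      rw [uIoc_of_le ht] at hs
      have hs0 : 0 ≤ s := hs.1.le
      have hst : s ≤ t := hs.2
      have hts : 0 ≤ t - s := by linarith
      have h1 : (t - s) ^ N ≤ t ^ N := pow_le_pow_left₀ hts (by linarith) N
      have h2 : ‖(A ^ (N+1)) (T s x) m‖ ≤ a ^ (N+1) * M := by
        calc ‖(A ^ (N+1)) (T s x) m‖ ≤ a ^ (N+1) * Stmt15.pnorm H (T s x) :=
              hpow (N+1) (T s x)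
          _ ≤ a ^ (N+1) * M :=
              mul_le_mul_of_nonneg_left (hMb s ⟨hs0, hst⟩) (pow_nonneg ha0 _)
      rw [norm_smul, Real.norm_eq_abs, abs_of_nonneg (by positivity)]
      have h1' : (t - s) ^ N / (Nat.factorial N : ℝ) ≤ t ^ N / (Nat.factorial N : ℝ) := by
        rw [div_eq_mul_inv, div_eq_mul_inv]
        exact mul_le_mul_of_nonneg_right h1 (by positivity)
      exact mul_le_mul h1' h2 (norm_nonneg _) (by positivity)
    calc ‖∫ s in (0:ℝ)..t, ((t - s) ^ N / (Nat.factorial N : ℝ)) • (A ^ (N+1)) (T s x) m‖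
        ≤ ((t ^ N / (Nat.factorial N : ℝ)) * (a ^ (N+1) * M)) * |t - 0| :=
          intervalIntegral.norm_integral_le_of_norm_le_const hbnd
      _ = (a * M * t) * ((a * t) ^ N / (Nat.factorial N : ℝ)) := by
          rw [sub_zero, abs_of_nonneg ht]
          field_simp
          ring
  have htay := Stmt15.taylor_exp T horbit hTadd A hA hT0 m x ht
  have h0 : Tendsto (fun N : ℕ => (a * M * t) * ((a * t) ^ N / (Nat.factorial N : ℝ)))
      atTop (𝓝 0) := by
    have hh := FloorSemiring.tendsto_pow_div_factorial_atTop (K := ℝ) (a * t)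
    have := hh.const_mul (a * M * t)
    simpa using this
  have hser : Tendsto (fun N : ℕ => ∑ k ∈ Finset.range (N+1),
      (t ^ k / (Nat.factorial k : ℝ)) • (A ^ k) x m) atTop (𝓝 (T t x m)) := by
    rw [tendsto_iff_norm_sub_tendsto_zero]
    apply squeeze_zero (fun N => norm_nonneg _) _ h0
    intro N
    have heq : (∑ k ∈ Finset.range (N+1), (t ^ k / (Nat.factorial k : ℝ)) • (A ^ k) x m)
        - T t x m
        = -(∫ s in (0:ℝ)..t,
            ((t - s) ^ N / (Nat.factorial N : ℝ)) • (A ^ (N+1)) (T s x) m) := by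
      rw [htay N]; abel
    rw [heq, norm_neg]
    exact hrem N
  have hcoord : ∀ N : ℕ, (∑ k ∈ Finset.range N,
      (t ^ k / (Nat.factorial k : ℝ)) • (A ^ k) x) m
      = ∑ k ∈ Finset.range N, (t ^ k / (Nat.factorial k : ℝ)) • (A ^ k) x m := by
    intro N
    simp [Finset.sum_apply]
  apply (tendsto_add_atTop_iff_nat 1).1
  exact hser.congr fun N => (hcoord (N+1)).symm
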